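/- arXiv:2503.04566 — 5 statements merged into one kernel-verified Lean document; each statement's English description precedes it below -/
import Mathlib

section
/- Let H be a Hermitian operator on a finite-dimensional complex inner product space that has at least two distinct eigenvalues. Let E0 be its smallest eigenvalue, E1 the second smallest distinct eigenvalue, and D0 the dimension of the eigenspace for E0. If |φ_1⟩, ..., |φ_t⟩ are orthonormal vectors satisfying ⟨φ_i| H |φ_i⟩ < E0 + (E1 − E0)/(D0 + 1) for every i = 1, ..., t, then t ≤ D0. -/
/-- Let H be a Hermitian operator on a finite-dimensional complex inner
product space with at least two distinct eigenvalues, E0 its smallest eigenvalue,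
E1 the second smallest distinct eigenvalue, and D0 the dimension of the eigenspace
for E0.  If φ_1, ..., φ_t are orthonormal vectors with ⟨φ_i|H|φ_i⟩ < E0 + (E1-E0)/(D0+1)
for all i, then t ≤ D0. -/
theorem small_energy_ground_dim {d : ℕ} (H : Matrix (Fin d) (Fin d) ℂ)
    (hH : H.IsHermitian) (E0 E1 : ℝ)
    (hE0 : IsLeast (Set.range hH.eigenvalues) E0)
    (hE1 : IsLeast {x | x ∈ Set.range hH.eigenvalues ∧ x ≠ E0} E1)
    (D0 : ℕ)
    (hD0 : D0 = Module.finrank ℂ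
      (Module.End.eigenspace (Matrix.toEuclideanLin H) ((E0 : ℂ))))
    (t : ℕ) (φ : Fin t → EuclideanSpace ℂ (Fin d))
    (hortho : Orthonormal ℂ φ)
    (henergy : ∀ i : Fin t,
      (inner ℂ (φ i) (Matrix.toEuclideanLin H (φ i)) : ℂ).re
        < E0 + (E1 - E0) / (D0 + 1)) :
    t ≤ D0 := by
  classical
  set T := Matrix.toEuclideanLin H with hT
  set b := hH.eigenvectorBasis with hbdef
  set ev := hH.eigenvalues with hevdef
  have hsymm : LinearMap.IsSymmetric T := Matrix.isHermitian_iff_isSymmetric.mp hH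
  -- eigenvector equation in EuclideanSpace form
  have hb : ∀ j, T (b j) = (ev j : ℂ) • b j := by
    intro j
    ext k
    have h := congrFun (hH.mulVec_eigenvectorBasis j) k
    simpa [hT, Matrix.toEuclideanLin_apply, Complex.real_smul] using h
  -- E0 < E1
  have hE0ltE1 : E0 < E1 := lt_of_le_of_ne (hE0.2 hE1.1.1) (Ne.symm hE1.1.2)
  -- coefficients
  set c : Fin t → Fin d → ℂ := fun i j => inner ℂ (b j) (φ i) with hc
  set p : Fin t → Fin d → ℝ := fun i j => ‖c i j‖ ^ 2 with hp
  have hprod : ∀ i j, (inner ℂ (φ i) (b j) : ℂ) * inner ℂ (b j) (φ i) = ((p i j : ℝ) : ℂ) := by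
    intro i j
    rw [← inner_conj_symm (φ i) (b j), RCLike.conj_mul]
    simp [hp, hc]
  -- sum of p = 1
  have hsum1 : ∀ i, ∑ j, p i j = 1 := by
    intro i
    have h := b.sum_inner_mul_inner (φ i) (φ i)
    rw [Finset.sum_congr rfl (fun j _ => hprod i j)] at h
    rw [inner_self_eq_norm_sq_to_K] at h
    have hn : ‖φ i‖ = 1 := hortho.1 i
    rw [hn] at h
    have := congrArg Complex.re h
    simpa [Complex.ofReal_sum] using this
  -- energy identity
  have hkey : ∀ i, (inner ℂ (φ i) (T (φ i)) : ℂ).re = ∑ j, ev j * p i j := by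
    intro i
    have h1 : (inner ℂ (φ i) (T (φ i)) : ℂ)
        = ∑ j, (ev j : ℂ) * ((p i j : ℝ) : ℂ) := by
      rw [← b.sum_inner_mul_inner (φ i) (T (φ i))]
      refine Finset.sum_congr rfl fun j _ => ?_
      have h2 : (inner ℂ (b j) (T (φ i)) : ℂ) = (ev j : ℂ) * inner ℂ (b j) (φ i) := by
        rw [← hsymm (b j) (φ i), hb j, inner_smul_left]
        simp [Complex.conj_ofReal]
      rw [h2, ← mul_assoc, mul_comm (inner ℂ (φ i) (b j) : ℂ) ((ev j : ℂ)), mul_assoc,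
        hprod i j]
    rw [h1]
    simp [Complex.ofReal_sum]
  -- the ground set
  set S : Finset (Fin d) := Finset.univ.filter (fun j => ev j = E0) with hS
  -- S.card ≤ D0
  have hcard : S.card ≤ D0 := by
    rw [hD0]
    have hmem : ∀ j : S, (b j : EuclideanSpace ℂ (Fin d))
        ∈ Module.End.eigenspace T ((E0 : ℂ)) := by
      rintro ⟨j, hj⟩
      rw [Module.End.mem_eigenspace_iff, hb j]
      rw [hS, Finset.mem_filter] at hj
      rw [hj.2]
    have hli : LinearIndependent ℂ (fun j : S =>
        (⟨b j, hmem j⟩ : Module.End.eigenspace T ((E0 : ℂ)))) := by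
      apply LinearIndependent.of_comp (Module.End.eigenspace T ((E0 : ℂ))).subtype
      have : LinearIndependent ℂ (fun j : S => (b j : EuclideanSpace ℂ (Fin d))) :=
        (b.orthonormal.linearIndependent).comp Subtype.val Subtype.val_injective
      exact this
    have := hli.fintype_card_le_finrank
    simpa using this
  -- per-i bound on the ground-space weight
  have hground : ∀ i, (D0 : ℝ) / (D0 + 1) < ∑ j ∈ S, p i j := by
    intro i
    have hlow : E0 + (E1 - E0) * (∑ j ∈ Sᶜ, p i j) ≤ ∑ j, ev j * p i j := by
      have hsplit : ∑ j, ev j * p i j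
          = ∑ j ∈ S, ev j * p i j + ∑ j ∈ Sᶜ, ev j * p i j :=
        (Finset.sum_add_sum_compl S _).symm
      have h1 : ∑ j ∈ S, ev j * p i j = E0 * ∑ j ∈ S, p i j := by
        rw [Finset.mul_sum]
        refine Finset.sum_congr rfl fun j hj => ?_
        rw [hS, Finset.mem_filter] at hj
        rw [hj.2]
      have h2 : E1 * ∑ j ∈ Sᶜ, p i j ≤ ∑ j ∈ Sᶜ, ev j * p i j := by
        rw [Finset.mul_sum]
        refine Finset.sum_le_sum fun j hj => ?_
        have hjne : ev j ≠ E0 := by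
          rw [hS] at hj
          simpa using (Finset.mem_compl.mp hj)
        have : E1 ≤ ev j := hE1.2 ⟨⟨j, rfl⟩, hjne⟩
        exact mul_le_mul_of_nonneg_right this (sq_nonneg _)
      have hpsplit : ∑ j ∈ S, p i j + ∑ j ∈ Sᶜ, p i j = 1 := by
        rw [Finset.sum_add_sum_compl]; exact hsum1 i
      calc E0 + (E1 - E0) * (∑ j ∈ Sᶜ, p i j)
          = E0 * (∑ j ∈ S, p i j + ∑ j ∈ Sᶜ, p i j)
            + (E1 - E0) * (∑ j ∈ Sᶜ, p i j) := by rw [hpsplit]; ring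
        _ = E0 * ∑ j ∈ S, p i j + E1 * ∑ j ∈ Sᶜ, p i j := by ring
        _ ≤ ∑ j ∈ S, ev j * p i j + ∑ j ∈ Sᶜ, ev j * p i j :=
            add_le_add (le_of_eq h1.symm) h2
        _ = ∑ j, ev j * p i j := by rw [Finset.sum_add_sum_compl]
    have hup : ∑ j, ev j * p i j < E0 + (E1 - E0) / (D0 + 1) := by
      rw [← hkey i]; exact henergy i
    have hcompl : ∑ j ∈ Sᶜ, p i j < 1 / (D0 + 1) := by
      have h := lt_of_le_of_lt hlow hup
      have hpos : (0:ℝ) < E1 - E0 := sub_pos.mpr hE0ltE1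
      have := (add_lt_add_iff_left E0).mp h
      rw [div_eq_mul_one_div] at this
      exact lt_of_mul_lt_mul_left this hpos.le
    have hpsplit : ∑ j ∈ S, p i j = 1 - ∑ j ∈ Sᶜ, p i j := by
      have := Finset.sum_add_sum_compl S (p i)
      rw [hsum1 i] at this
      linarith
    rw [hpsplit]
    have hD1 : (0:ℝ) < (D0:ℝ) + 1 := by positivity
    have : (D0 : ℝ) / (D0 + 1) = 1 - 1 / (D0 + 1) := by field_simp; ring
    rw [this]
    linarith
  -- Bessel: total ground weight ≤ S.card
  have hbessel : ∑ i, ∑ j ∈ S, p i j ≤ (S.card : ℝ) := by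
    rw [Finset.sum_comm]
    calc ∑ j ∈ S, ∑ i, p i j ≤ ∑ j ∈ S, (1:ℝ) := by
          refine Finset.sum_le_sum fun j _ => ?_
          have h := hortho.sum_inner_products_le (s := Finset.univ) (b j)
          have hn : ‖(b j : EuclideanSpace ℂ (Fin d))‖ = 1 := b.orthonormal.1 j
          rw [hn, one_pow] at h
          refine le_trans (le_of_eq ?_) h
          refine Finset.sum_congr rfl fun i _ => ?_
          rw [hp, hc, norm_inner_symm]
      _ = (S.card : ℝ) := by simp
  -- conclude
  rcases Nat.eq_zero_or_pos t with ht | ht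
  · omega
  have hstrict : (t : ℝ) * ((D0 : ℝ) / (D0 + 1)) < ∑ i, ∑ j ∈ S, p i j := by
    have : ∑ i : Fin t, ((D0 : ℝ) / (D0 + 1)) < ∑ i, ∑ j ∈ S, p i j := by
      refine Finset.sum_lt_sum_of_nonempty ?_ fun i _ => hground i
      exact Finset.univ_nonempty_iff.mpr (Fin.pos_iff_nonempty.mp ht)
    simpa [Finset.sum_const, nsmul_eq_mul] using this
  have hfin : (t : ℝ) * ((D0 : ℝ) / (D0 + 1)) < (D0 : ℝ) :=
    lt_of_lt_of_le (lt_of_lt_of_le hstrict hbessel) (by exact_mod_cast hcard)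
  have hD1 : (0:ℝ) < (D0:ℝ) + 1 := by positivity
  have hmul : (t : ℝ) * D0 < D0 * (D0 + 1) := by
    have := mul_lt_mul_of_pos_right hfin hD1
    rw [mul_assoc, div_mul_cancel₀] at this
    · linarith
    · exact ne_of_gt hD1
  rcases Nat.eq_zero_or_pos D0 with hD | hD
  · rw [hD] at hmul; simp at hmul
  · have : (t:ℝ) < (D0:ℝ) + 1 := by
      have hDpos : (0:ℝ) < D0 := by exact_mod_cast hD
      nlinarith
    exact_mod_cast Nat.lt_succ_iff.mp (by exact_mod_cast this)
end

section
/- Let k ≥ 1 and let M be a unitary 2^k × 2^k complex matrix. Let G_k = {X_1, ..., X_k, Z_1, ..., Z_k}, where X_i (resp. Z_i) is the n-fold Kronecker product acting as the Pauli matrix X (resp. Z) on the i-th tensor factor and as the 2×2 identity on all others. Suppose ε ≥ 0 satisfies ε ≤ 2^{k+1}/k, and for every P ∈ G_k, min(‖MP − PM‖_F², ‖MP + PM‖_F²) ≤ ε. Then there exist a real number θ and a Pauli string Q' ∈ P_k^+ such that ‖M − e^{iθ}Q'‖_F² ≤ (k/2)·ε + 2^{−k−2}·k²·ε². -/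
open Matrix

/-- The single-qubit Pauli matrices I, X, Y, Z. -/
noncomputable def pauli : Fin 4 → Matrix (Fin 2) (Fin 2) ℂ
  | 0 => 1
  | 1 => !![0, 1; 1, 0]
  | 2 => !![0, -Complex.I; Complex.I, 0]
  | 3 => !![1, 0; 0, -1]

/-- The k-qubit Pauli string (with phase +1) with single-qubit factor `pauli (s i)`
on the i-th tensor factor. -/
noncomputable def pauliString {k : ℕ} (s : Fin k → Fin 4) :
    Matrix (Fin k → Fin 2) (Fin k → Fin 2) ℂ :=
  fun x y => ∏ i, pauli (s i) (x i) (y i)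

/-- The Pauli string acting as X on the i-th qubit and as identity elsewhere. -/
noncomputable def XAt {k : ℕ} (i : Fin k) : Matrix (Fin k → Fin 2) (Fin k → Fin 2) ℂ :=
  pauliString (fun j => if j = i then 1 else 0)

/-- The Pauli string acting as Z on the i-th qubit and as identity elsewhere. -/
noncomputable def ZAt {k : ℕ} (i : Fin k) : Matrix (Fin k → Fin 2) (Fin k → Fin 2) ℂ :=
  pauliString (fun j => if j = i then 3 else 0)

/-- The squared Frobenius norm of a complex matrix. -/
noncomputable def frobSq {m : Type*} [Fintype m] (M : Matrix m m ℂ) : ℝ :=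
  ∑ i, ∑ j, ‖M i j‖ ^ 2

namespace AuxPauli
open Finset Complex

/-- Frobenius inner product. -/
noncomputable def pin {k : ℕ} (A B : Matrix (Fin k → Fin 2) (Fin k → Fin 2) ℂ) : ℂ :=
  ∑ x, ∑ y, (starRingEnd ℂ) (A x y) * B x y

lemma pauli_conj (p : Fin 4) (a b : Fin 2) : (starRingEnd ℂ) (pauli p a b) = pauli p b a := by
  fin_cases p <;> fin_cases a <;> fin_cases b <;> simp [pauli]

lemma pauli_complete (a b a' b' : Fin 2) :
    ∑ p : Fin 4, (starRingEnd ℂ) (pauli p a b) * pauli p a' b' =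
      if a = a' ∧ b = b' then 2 else 0 := by
  fin_cases a <;> fin_cases b <;> fin_cases a' <;> fin_cases b' <;>
    simp [Fin.sum_univ_four, pauli] <;> norm_num [Complex.ext_iff]

lemma pauli_orth (p q : Fin 4) :
    ∑ a : Fin 2, ∑ b : Fin 2, (starRingEnd ℂ) (pauli p a b) * pauli q a b =
      if p = q then 2 else 0 := by
  fin_cases p <;> fin_cases q <;>
    simp [Fin.sum_univ_two, pauli] <;> norm_num [Complex.ext_iff]

lemma prod_ite_all {k : ℕ} (P : Fin k → Prop) [DecidablePred P] (c : ℂ) :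
    (∏ i, if P i then c else 0) = if ∀ i, P i then c ^ k else 0 := by
  by_cases h : ∀ i, P i
  · rw [if_pos h, Finset.prod_congr rfl (fun i _ => if_pos (h i))]
    simp
  · rw [if_neg h]
    push_neg at h; obtain ⟨i, hi⟩ := h
    exact Finset.prod_eq_zero (Finset.mem_univ i) (if_neg hi)

lemma sum_pi_prod {k : ℕ} {κ : Type*} [Fintype κ] (f : Fin k → κ → ℂ) :
    ∑ s : Fin k → κ, ∏ i, f i (s i) = ∏ i, ∑ p, f i p := by
  rw [Finset.prod_univ_sum, Fintype.piFinset_univ]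

lemma pauliString_mul_apply {k : ℕ} (s t : Fin k → Fin 4) (x y : Fin k → Fin 2) :
    (pauliString s * pauliString t) x y = ∏ i, (pauli (s i) * pauli (t i)) (x i) (y i) := by
  simp only [Matrix.mul_apply, pauliString, ← Finset.prod_mul_distrib]
  rw [Finset.prod_univ_sum]
  simp

lemma pauliString_herm {k : ℕ} (s : Fin k → Fin 4) : (pauliString s)ᴴ = pauliString s := by
  ext x y
  simp only [Matrix.conjTranspose_apply, pauliString, star_def, map_prod, pauli_conj]

lemma pin_tr {k : ℕ} (A B : Matrix (Fin k → Fin 2) (Fin k → Fin 2) ℂ) :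
    pin A B = Matrix.trace (Aᴴ * B) := by
  simp only [Matrix.trace, Matrix.diag_apply, Matrix.mul_apply, Matrix.conjTranspose_apply,
    star_def]
  rw [pin, Finset.sum_comm]

lemma pin_herm_tr {k : ℕ} (s : Fin k → Fin 4) (N : Matrix (Fin k → Fin 2) (Fin k → Fin 2) ℂ) :
    pin (pauliString s) N = Matrix.trace (pauliString s * N) := by
  rw [pin_tr, pauliString_herm]

lemma pin_sub {k : ℕ} (A B C : Matrix (Fin k → Fin 2) (Fin k → Fin 2) ℂ) :
    pin A (B - C) = pin A B - pin A C := by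
  simp [pin, mul_sub, Finset.sum_sub_distrib]

lemma pin_smul {k : ℕ} (c : ℂ) (A B : Matrix (Fin k → Fin 2) (Fin k → Fin 2) ℂ) :
    pin A (c • B) = c * pin A B := by
  simp [pin, Finset.mul_sum]
  apply Finset.sum_congr rfl; intro x _
  apply Finset.sum_congr rfl; intro y _
  ring

lemma pauliString_orth {k : ℕ} (t s : Fin k → Fin 4) :
    pin (pauliString t) (pauliString s) = if t = s then (2:ℂ)^k else 0 := by
  have h1 : ∀ x : Fin k → Fin 2,
      ∑ y, (starRingEnd ℂ) (pauliString t x y) * pauliString s x y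
        = ∏ i, ∑ b : Fin 2, (starRingEnd ℂ) (pauli (t i) (x i) b) * pauli (s i) (x i) b := by
    intro x
    simp only [pauliString, map_prod, ← Finset.prod_mul_distrib]
    rw [Finset.prod_univ_sum]
    simp
  rw [pin, Finset.sum_congr rfl fun x _ => h1 x,
    sum_pi_prod (fun i a => ∑ b : Fin 2, (starRingEnd ℂ) (pauli (t i) a b) * pauli (s i) a b)]
  rw [Finset.prod_congr rfl fun i _ => pauli_orth (t i) (s i), prod_ite_all]
  have : (∀ i, t i = s i) ↔ t = s := funext_iff.symm
  rw [if_congr this rfl rfl]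

lemma pauliString_complete {k : ℕ} (x y x' y' : Fin k → Fin 2) :
    ∑ s : Fin k → Fin 4, (starRingEnd ℂ) (pauliString s x y) * pauliString s x' y' =
      if x = x' ∧ y = y' then (2:ℂ)^k else 0 := by
  have h1 : ∀ s : Fin k → Fin 4, (starRingEnd ℂ) (pauliString s x y) * pauliString s x' y'
      = ∏ i, ((starRingEnd ℂ) (pauli (s i) (x i) (y i)) * pauli (s i) (x' i) (y' i)) := by
    intro s
    simp only [pauliString, map_prod, ← Finset.prod_mul_distrib]
  rw [Finset.sum_congr rfl fun s _ => h1 s,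
    sum_pi_prod (fun i p => (starRingEnd ℂ) (pauli p (x i) (y i)) * pauli p (x' i) (y' i))]
  rw [Finset.prod_congr rfl fun i _ => pauli_complete (x i) (y i) (x' i) (y' i), prod_ite_all]
  have : (∀ i, x i = x' i ∧ y i = y' i) ↔ (x = x' ∧ y = y') := by
    rw [forall_and, funext_iff, funext_iff]
  rw [if_congr this rfl rfl]


lemma frobSq_eq_sum_normSq {k : ℕ} (N : Matrix (Fin k → Fin 2) (Fin k → Fin 2) ℂ) :
    frobSq N = ∑ x, ∑ y, Complex.normSq (N x y) := by
  simp [frobSq, ← Complex.sq_norm]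

lemma parseval_c {k : ℕ} (N : Matrix (Fin k → Fin 2) (Fin k → Fin 2) ℂ) :
    ∑ s : Fin k → Fin 4, ((Complex.normSq (pin (pauliString s) N)) : ℂ)
      = 2^k * ∑ q : (Fin k → Fin 2) × (Fin k → Fin 2), ((Complex.normSq (N q.1 q.2)) : ℂ) := by
  have pin_pair : ∀ (A B : Matrix (Fin k → Fin 2) (Fin k → Fin 2) ℂ),
      pin A B = ∑ q : (Fin k → Fin 2) × (Fin k → Fin 2),
        (starRingEnd ℂ) (A q.1 q.2) * B q.1 q.2 := by
    intro A B
    rw [pin, ← Finset.sum_product']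
    rfl
  calc ∑ s : Fin k → Fin 4, ((Complex.normSq (pin (pauliString s) N)) : ℂ)
      = ∑ s : Fin k → Fin 4, ∑ q : (Fin k → Fin 2) × (Fin k → Fin 2),
          ∑ r : (Fin k → Fin 2) × (Fin k → Fin 2),
          ((starRingEnd ℂ) (N q.1 q.2) * N r.1 r.2) *
            (pauliString s q.1 q.2 * (starRingEnd ℂ) (pauliString s r.1 r.2)) := by
        refine Finset.sum_congr rfl fun s _ => ?_
        rw [Complex.normSq_eq_conj_mul_self, pin_pair, map_sum, Finset.sum_mul_sum]
        refine Finset.sum_congr rfl fun q _ => Finset.sum_congr rfl fun r _ => ?_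
        simp only [_root_.map_mul, Complex.conj_conj]
        ring
    _ = ∑ q : (Fin k → Fin 2) × (Fin k → Fin 2), ∑ r : (Fin k → Fin 2) × (Fin k → Fin 2),
          ((starRingEnd ℂ) (N q.1 q.2) * N r.1 r.2) *
            ∑ s : Fin k → Fin 4, pauliString s q.1 q.2 * (starRingEnd ℂ) (pauliString s r.1 r.2) := by
        rw [Finset.sum_comm]
        refine Finset.sum_congr rfl fun q _ => ?_
        rw [Finset.sum_comm]
        refine Finset.sum_congr rfl fun r _ => ?_
        rw [Finset.mul_sum]
    _ = ∑ q : (Fin k → Fin 2) × (Fin k → Fin 2), ((Complex.normSq (N q.1 q.2)) : ℂ) * 2^k := by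
        refine Finset.sum_congr rfl fun q _ => ?_
        rw [Finset.sum_eq_single q]
        · have := pauliString_complete q.1 q.2 q.1 q.2
          rw [Finset.sum_congr rfl fun s _ => (mul_comm (pauliString s q.1 q.2) _), this,
            if_pos ⟨rfl, rfl⟩, ← Complex.normSq_eq_conj_mul_self]
        · intro r _ hr
          have : ∑ s : Fin k → Fin 4, pauliString s q.1 q.2 * (starRingEnd ℂ) (pauliString s r.1 r.2)
              = (starRingEnd ℂ) (∑ s : Fin k → Fin 4,
                  (starRingEnd ℂ) (pauliString s q.1 q.2) * pauliString s r.1 r.2) := by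
            rw [map_sum]
            exact Finset.sum_congr rfl fun s _ => by
              simp only [_root_.map_mul, Complex.conj_conj]
          rw [this, pauliString_complete, if_neg, map_zero, mul_zero]
          intro ⟨h1, h2⟩
          exact hr.symm (Prod.ext h1 h2)
        · intro h
          exact absurd (Finset.mem_univ q) h
    _ = 2^k * ∑ q : (Fin k → Fin 2) × (Fin k → Fin 2), ((Complex.normSq (N q.1 q.2)) : ℂ) := by
        rw [Finset.mul_sum]
        exact Finset.sum_congr rfl fun q _ => mul_comm _ _

lemma parseval {k : ℕ} (N : Matrix (Fin k → Fin 2) (Fin k → Fin 2) ℂ) :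
    ∑ s : Fin k → Fin 4, Complex.normSq (pin (pauliString s) N) = 2^k * frobSq N := by
  apply Complex.ofReal_injective
  push_cast
  rw [parseval_c, frobSq_eq_sum_normSq]
  push_cast
  rw [← Finset.sum_product']
  rfl

lemma frobSq_unitary {k : ℕ} (M : Matrix (Fin k → Fin 2) (Fin k → Fin 2) ℂ)
    (hM : M ∈ Matrix.unitaryGroup (Fin k → Fin 2) ℂ) : frobSq M = 2^k := by
  have h : M * Mᴴ = 1 := by
    have := hM.2
    rwa [Matrix.star_eq_conjTranspose] at this
  have htr : Matrix.trace (M * Mᴴ) = ((2:ℝ)^k : ℂ) := by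
    rw [h, Matrix.trace_one]
    simp [Fintype.card_fun]
  have htr2 : Matrix.trace (M * Mᴴ) = ((frobSq M : ℝ) : ℂ) := by
    rw [frobSq_eq_sum_normSq]
    push_cast
    simp only [Matrix.trace, Matrix.diag_apply, Matrix.mul_apply, Matrix.conjTranspose_apply,
      star_def, Complex.mul_conj]
  have := htr.symm.trans htr2
  exact_mod_cast this.symm


section gen
variable {k : ℕ} (p : Fin 4) (m : Fin 4 → Fin 4) (f : Fin 4 → ℂ)

lemma GAt_mul_left (hmul : ∀ q, pauli p * pauli q = f q • pauli (m q))
    (i : Fin k) (s : Fin k → Fin 4) :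
    pauliString (fun j => if j = i then p else 0) * pauliString s
      = f (s i) • pauliString (Function.update s i (m (s i))) := by
  ext x y
  rw [pauliString_mul_apply, Matrix.smul_apply, smul_eq_mul, pauliString,
    Fintype.prod_eq_mul_prod_compl i, Fintype.prod_eq_mul_prod_compl i]
  rw [if_pos rfl, hmul, Function.update_self, Matrix.smul_apply, smul_eq_mul, mul_assoc]
  congr 1
  congr 1
  apply Finset.prod_congr rfl
  intro j hj
  have hji : j ≠ i := by simpa using hj
  rw [if_neg hji, Function.update_of_ne hji]
  show (pauli 0 * pauli (s j)) (x j) (y j) = _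
  rw [show pauli 0 = 1 from rfl, one_mul]

lemma GAt_mul_right (hmul : ∀ q, pauli q * pauli p = f q • pauli (m q))
    (i : Fin k) (s : Fin k → Fin 4) :
    pauliString s * pauliString (fun j => if j = i then p else 0)
      = f (s i) • pauliString (Function.update s i (m (s i))) := by
  ext x y
  rw [pauliString_mul_apply, Matrix.smul_apply, smul_eq_mul, pauliString,
    Fintype.prod_eq_mul_prod_compl i, Fintype.prod_eq_mul_prod_compl i]
  rw [if_pos rfl, hmul, Function.update_self, Matrix.smul_apply, smul_eq_mul, mul_assoc]
  congr 1
  congr 1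
  apply Finset.prod_congr rfl
  intro j hj
  have hji : j ≠ i := by simpa using hj
  rw [if_neg hji, Function.update_of_ne hji]
  show (pauli (s j) * pauli 0) (x j) (y j) = _
  rw [show pauli 0 = 1 from rfl, mul_one]

end gen

lemma gen_bound {k : ℕ} (M : Matrix (Fin k → Fin 2) (Fin k → Fin 2) ℂ)
    (p : Fin 4) (m : Fin 4 → Fin 4) (f : Fin 4 → ℂ) (bs : Fin 4 → Bool)
    (hl : ∀ q, pauli p * pauli q = f q • pauli (m q))
    (hr : ∀ q, pauli q * pauli p = (((if bs q then 1 else -1) : ℂ) * f q) • pauli (m q))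
    (hminv : ∀ q, m (m q) = q) (hsm : ∀ q, bs (m q) = bs q)
    (hf : ∀ q, Complex.normSq (f q) = 1)
    (i : Fin k) (b : Bool) (ε : ℝ)
    (hfrob : frobSq (M * pauliString (fun j => if j = i then p else 0)
        - (if b then (1:ℂ) else -1) • (pauliString (fun j => if j = i then p else 0) * M)) ≤ ε) :
    ∑ t ∈ Finset.univ.filter (fun t => bs (t i) ≠ b),
        Complex.normSq (pin (pauliString t) M) ≤ 2^k * ε / 4 := by
  set G : Matrix (Fin k → Fin 2) (Fin k → Fin 2) ℂ :=
    pauliString (fun j => if j = i then p else 0) with hG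
  set e : ℂ := if b then 1 else -1 with he
  set E : (Fin k → Fin 4) → (Fin k → Fin 4) := fun s => Function.update s i (m (s i)) with hE
  set D : Matrix (Fin k → Fin 2) (Fin k → Fin 2) ℂ := M * G - e • (G * M) with hD
  have hEinv : Function.Involutive E := by
    intro s; funext j
    rcases eq_or_ne j i with rfl | hj
    · simp [hE, Function.update_self, hminv]
    · simp [hE, Function.update_of_ne hj]
  have hEi : ∀ s, (E s) i = m (s i) := fun s => Function.update_self _ _ _
  have hcoef : ∀ s, pin (pauliString s) D
      = (f (s i) * (1 - e * (if bs (s i) then 1 else -1))) * pin (pauliString (E s)) M := by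
    intro s
    have e1 : pin (pauliString s) (M * G) = f (s i) * pin (pauliString (E s)) M := by
      rw [pin_herm_tr, pin_herm_tr, ← Matrix.mul_assoc, Matrix.trace_mul_comm, ← Matrix.mul_assoc,
        hG, GAt_mul_left p m f hl i s, Matrix.smul_mul, Matrix.trace_smul, smul_eq_mul]
    have e2 : pin (pauliString s) (G * M)
        = ((if bs (s i) then (1:ℂ) else -1) * f (s i)) * pin (pauliString (E s)) M := by
      rw [pin_herm_tr, pin_herm_tr, ← Matrix.mul_assoc, hG,
        GAt_mul_right p m (fun q => ((if bs q then (1:ℂ) else -1) * f q)) hr i s,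
        Matrix.smul_mul, Matrix.trace_smul, smul_eq_mul]
    rw [hD, pin_sub, pin_smul, e1, e2]
    ring
  have h1 : ∑ s : Fin k → Fin 4, Complex.normSq (pin (pauliString s) D) ≤ 2^k * ε := by
    rw [parseval]
    have : (0:ℝ) ≤ 2^k := by positivity
    exact mul_le_mul_of_nonneg_left hfrob this
  have hre : ∑ s : Fin k → Fin 4, Complex.normSq (pin (pauliString s) D)
      = ∑ t : Fin k → Fin 4, Complex.normSq (1 - e * (if bs (t i) then 1 else -1))
          * Complex.normSq (pin (pauliString t) M) := by
    rw [Finset.sum_congr rfl fun s _ => by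
      rw [hcoef s, _root_.map_mul, _root_.map_mul, hf, one_mul]]
    exact Fintype.sum_bijective E hEinv.bijective _ _ (fun s => by rw [hEi, hsm])
  have h2 : ∑ t ∈ Finset.univ.filter (fun t => bs (t i) ≠ b),
      4 * Complex.normSq (pin (pauliString t) M) ≤ 2^k * ε := by
    calc ∑ t ∈ Finset.univ.filter (fun t => bs (t i) ≠ b),
          4 * Complex.normSq (pin (pauliString t) M)
        = ∑ t ∈ Finset.univ.filter (fun t => bs (t i) ≠ b),
            Complex.normSq (1 - e * (if bs (t i) then 1 else -1))
              * Complex.normSq (pin (pauliString t) M) := by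
          refine Finset.sum_congr rfl fun t ht => ?_
          have hb : bs (t i) = !b := by
            have := (Finset.mem_filter.mp ht).2
            cases b <;> cases hbt : bs (t i) <;> simp_all
          rw [hb]
          cases b <;> norm_num [he, Complex.normSq_apply]
      _ ≤ ∑ t : Fin k → Fin 4, Complex.normSq (1 - e * (if bs (t i) then 1 else -1))
              * Complex.normSq (pin (pauliString t) M) :=
          Finset.sum_le_sum_of_subset_of_nonneg (Finset.subset_univ _)
            (fun t _ _ => mul_nonneg (Complex.normSq_nonneg _) (Complex.normSq_nonneg _))
      _ = ∑ s : Fin k → Fin 4, Complex.normSq (pin (pauliString s) D) := hre.symm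
      _ ≤ 2^k * ε := h1
  rw [← Finset.mul_sum] at h2
  linarith

def mX : Fin 4 → Fin 4 := ![1, 0, 3, 2]
noncomputable def fX : Fin 4 → ℂ := ![1, 1, Complex.I, -Complex.I]
def bsX : Fin 4 → Bool := ![true, true, false, false]
def mZ : Fin 4 → Fin 4 := ![3, 2, 1, 0]
noncomputable def fZ : Fin 4 → ℂ := ![1, Complex.I, -Complex.I, 1]
def bsZ : Fin 4 → Bool := ![true, false, false, true]
def qOf : Bool → Bool → Fin 4
  | true, true => 0
  | true, false => 1
  | false, false => 2
  | false, true => 3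

lemma hlX : ∀ q, pauli 1 * pauli q = fX q • pauli (mX q) := by
  intro q; fin_cases q <;> ext a b <;> fin_cases a <;> fin_cases b <;>
    simp [pauli, mX, fX, Matrix.mul_apply, Fin.sum_univ_two]

lemma hrX : ∀ q, pauli q * pauli 1 = (((if bsX q then 1 else -1) : ℂ) * fX q) • pauli (mX q) := by
  intro q; fin_cases q <;> ext a b <;> fin_cases a <;> fin_cases b <;>
    simp [pauli, mX, fX, bsX, Matrix.mul_apply, Fin.sum_univ_two]

lemma hlZ : ∀ q, pauli 3 * pauli q = fZ q • pauli (mZ q) := by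
  intro q; fin_cases q <;> ext a b <;> fin_cases a <;> fin_cases b <;>
    simp [pauli, mZ, fZ, Matrix.mul_apply, Fin.sum_univ_two]

lemma hrZ : ∀ q, pauli q * pauli 3 = (((if bsZ q then 1 else -1) : ℂ) * fZ q) • pauli (mZ q) := by
  intro q; fin_cases q <;> ext a b <;> fin_cases a <;> fin_cases b <;>
    simp [pauli, mZ, fZ, bsZ, Matrix.mul_apply, Fin.sum_univ_two]

lemma hfX : ∀ q, Complex.normSq (fX q) = 1 := by
  intro q; fin_cases q <;> simp [fX]

lemma hfZ : ∀ q, Complex.normSq (fZ q) = 1 := by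
  intro q; fin_cases q <;> simp [fZ]

lemma hmXinv : ∀ q, mX (mX q) = q := by decide
lemma hmZinv : ∀ q, mZ (mZ q) = q := by decide
lemma hsmX : ∀ q, bsX (mX q) = bsX q := by decide
lemma hsmZ : ∀ q, bsZ (mZ q) = bsZ q := by decide
lemma huniq : ∀ q, qOf (bsX q) (bsZ q) = q := by decide

end AuxPauli

lemma AuxPauli.zp_eq (k : ℕ) : (2:ℝ)^(-(k:ℤ) - 2) = ((2:ℝ)^k * 4)⁻¹ := by
  rw [show -(k:ℤ) - 2 = -((k+2 : ℕ) : ℤ) by push_cast; ring, _root_.zpow_neg, zpow_natCast,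
    pow_add]
  norm_num


set_option maxHeartbeats 2000000 in
open AuxPauli in
/-- If a unitary M on k qubits almost commutes or almost anticommutes
(up to ε in squared Frobenius norm) with every element of G_k = {X_1,...,X_k,Z_1,...,Z_k},
where 0 ≤ ε ≤ 2^{k+1}/k, then M is within squared Frobenius distance
(k/2)·ε + 2^{-k-2}·k²·ε² of some phase times a Pauli string. -/
theorem approx_commute_with_Pauli_then_Pauli {k : ℕ} (hk : 1 ≤ k)
    (M : Matrix (Fin k → Fin 2) (Fin k → Fin 2) ℂ)
    (hM : M ∈ Matrix.unitaryGroup (Fin k → Fin 2) ℂ)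
    (ε : ℝ) (hε0 : 0 ≤ ε) (hεsmall : ε ≤ 2 ^ (k + 1) / k)
    (hX : ∀ i : Fin k,
      min (frobSq (M * XAt i - XAt i * M)) (frobSq (M * XAt i + XAt i * M)) ≤ ε)
    (hZ : ∀ i : Fin k,
      min (frobSq (M * ZAt i - ZAt i * M)) (frobSq (M * ZAt i + ZAt i * M)) ≤ ε) :
    ∃ (θ : ℝ) (s : Fin k → Fin 4),
      frobSq (M - Complex.exp (θ * Complex.I) • pauliString s)
        ≤ (k / 2 : ℝ) * ε + 2 ^ (-(k : ℤ) - 2) * (k : ℝ) ^ 2 * ε ^ 2 := by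
  classical
  have ha0 : ∀ t : Fin k → Fin 4, 0 ≤ Complex.normSq (AuxPauli.pin (pauliString t) M) := fun t => Complex.normSq_nonneg _
  -- choose the commuting/anticommuting signs
  have hXb : ∀ i : Fin k, ∃ b : Bool,
      ∑ t ∈ Finset.univ.filter (fun t => bsX (t i) ≠ b), Complex.normSq (AuxPauli.pin (pauliString t) M) ≤ 2^k * ε / 4 := by
    intro i
    have : ∃ b : Bool, frobSq (M * XAt i
        - (if b then (1:ℂ) else -1) • (XAt i * M)) ≤ ε := by
      rcases min_le_iff.mp (hX i) with h | h
      · exact ⟨true, by simpa using h⟩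
      · exact ⟨false, by simpa [neg_smul, sub_neg_eq_add] using h⟩
    obtain ⟨b, hb⟩ := this
    simp only [XAt] at hb
    exact ⟨b, gen_bound M 1 mX fX bsX hlX hrX hmXinv hsmX hfX i b ε hb⟩
  have hZb : ∀ i : Fin k, ∃ b : Bool,
      ∑ t ∈ Finset.univ.filter (fun t => bsZ (t i) ≠ b), Complex.normSq (AuxPauli.pin (pauliString t) M) ≤ 2^k * ε / 4 := by
    intro i
    have : ∃ b : Bool, frobSq (M * ZAt i
        - (if b then (1:ℂ) else -1) • (ZAt i * M)) ≤ ε := by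
      rcases min_le_iff.mp (hZ i) with h | h
      · exact ⟨true, by simpa using h⟩
      · exact ⟨false, by simpa [neg_smul, sub_neg_eq_add] using h⟩
    obtain ⟨b, hb⟩ := this
    simp only [ZAt] at hb
    exact ⟨b, gen_bound M 3 mZ fZ bsZ hlZ hrZ hmZinv hsmZ hfZ i b ε hb⟩
  choose bXc hbXc using hXb
  choose bZc hbZc using hZb
  set sstar : Fin k → Fin 4 := fun i => qOf (bXc i) (bZc i) with hsstar
  -- union bound
  have hstep : ∀ t : Fin k → Fin 4, t ≠ sstar → Complex.normSq (AuxPauli.pin (pauliString t) M) ≤ ∑ i : Fin k,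
      ((if bsX (t i) ≠ bXc i then Complex.normSq (AuxPauli.pin (pauliString t) M) else 0)
        + (if bsZ (t i) ≠ bZc i then Complex.normSq (AuxPauli.pin (pauliString t) M) else 0)) := by
    intro t ht
    obtain ⟨i0, hi0⟩ : ∃ i, t i ≠ sstar i := by
      by_contra h; push_neg at h; exact ht (funext h)
    have key : bsX (t i0) ≠ bXc i0 ∨ bsZ (t i0) ≠ bZc i0 := by
      by_contra h
      push_neg at h
      apply hi0
      show t i0 = qOf (bXc i0) (bZc i0)
      rw [← h.1, ← h.2]
      exact (huniq (t i0)).symm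
    refine le_trans (b := (if bsX (t i0) ≠ bXc i0 then Complex.normSq (AuxPauli.pin (pauliString t) M) else 0)
        + (if bsZ (t i0) ≠ bZc i0 then Complex.normSq (AuxPauli.pin (pauliString t) M) else 0))
      ?_ (Finset.single_le_sum (f := fun i =>
        ((if bsX (t i) ≠ bXc i then Complex.normSq (AuxPauli.pin (pauliString t) M) else 0)
          + (if bsZ (t i) ≠ bZc i then Complex.normSq (AuxPauli.pin (pauliString t) M) else 0)))
        (fun i _ => add_nonneg (by split_ifs; exacts [ha0 t, le_rfl])
          (by split_ifs; exacts [ha0 t, le_rfl])) (Finset.mem_univ i0))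
    rcases key with hk2 | hk2
    · rw [if_pos hk2]; split_ifs <;> linarith [ha0 t]
    · rw [if_pos hk2]; split_ifs <;> linarith [ha0 t]
  have hdelta : ∑ t ∈ Finset.univ.erase sstar, Complex.normSq (AuxPauli.pin (pauliString t) M) ≤ (2*(k:ℝ)) * (2^k * ε / 4) := by
    calc ∑ t ∈ Finset.univ.erase sstar, Complex.normSq (AuxPauli.pin (pauliString t) M)
        ≤ ∑ t ∈ Finset.univ.erase sstar, ∑ i : Fin k,
            ((if bsX (t i) ≠ bXc i then Complex.normSq (AuxPauli.pin (pauliString t) M) else 0)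
              + (if bsZ (t i) ≠ bZc i then Complex.normSq (AuxPauli.pin (pauliString t) M) else 0)) :=
          Finset.sum_le_sum fun t ht => hstep t (Finset.mem_erase.mp ht).1
      _ ≤ ∑ t : Fin k → Fin 4, ∑ i : Fin k,
            ((if bsX (t i) ≠ bXc i then Complex.normSq (AuxPauli.pin (pauliString t) M) else 0)
              + (if bsZ (t i) ≠ bZc i then Complex.normSq (AuxPauli.pin (pauliString t) M) else 0)) :=
          Finset.sum_le_sum_of_subset_of_nonneg (Finset.subset_univ _)
            (fun t _ _ => Finset.sum_nonneg fun i _ =>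
              add_nonneg (by split_ifs; exacts [ha0 t, le_rfl])
                (by split_ifs; exacts [ha0 t, le_rfl]))
      _ = ∑ i : Fin k, ∑ t : Fin k → Fin 4,
            ((if bsX (t i) ≠ bXc i then Complex.normSq (AuxPauli.pin (pauliString t) M) else 0)
              + (if bsZ (t i) ≠ bZc i then Complex.normSq (AuxPauli.pin (pauliString t) M) else 0)) := Finset.sum_comm
      _ = ∑ i : Fin k, ((∑ t : Fin k → Fin 4, if bsX (t i) ≠ bXc i then Complex.normSq (AuxPauli.pin (pauliString t) M) else 0)
            + (∑ t : Fin k → Fin 4, if bsZ (t i) ≠ bZc i then Complex.normSq (AuxPauli.pin (pauliString t) M) else 0)) :=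
          Finset.sum_congr rfl fun i _ => Finset.sum_add_distrib
      _ ≤ ∑ _i : Fin k, (2^k * ε / 4 + 2^k * ε / 4) := by
          refine Finset.sum_le_sum fun i _ => ?_
          rw [← Finset.sum_filter, ← Finset.sum_filter]
          exact add_le_add (hbXc i) (hbZc i)
      _ = (2*(k:ℝ)) * (2^k * ε / 4) := by
          rw [Finset.sum_const, Finset.card_univ, Fintype.card_fin]
          push_cast; ring
  -- totals
  have htot : ∑ t : Fin k → Fin 4, Complex.normSq (AuxPauli.pin (pauliString t) M) = 2^k * 2^k := by
    rw [parseval M, frobSq_unitary M hM]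
  refine ⟨(AuxPauli.pin (pauliString sstar) M).arg, sstar, ?_⟩
  set α : ℂ := AuxPauli.pin (pauliString sstar) M with hα
  set c : ℂ := Complex.exp ((α.arg : ℝ) * Complex.I) with hc
  have hcoef2 : ∀ t : Fin k → Fin 4, AuxPauli.pin (pauliString t) (M - c • pauliString sstar)
      = AuxPauli.pin (pauliString t) M - (if t = sstar then c * 2^k else 0) := by
    intro t
    rw [pin_sub, pin_smul, pauliString_orth]
    split_ifs <;> ring
  have hsplit : ∑ t : Fin k → Fin 4,
        Complex.normSq (AuxPauli.pin (pauliString t) (M - c • pauliString sstar))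
      = Complex.normSq (α - c * 2^k) + ∑ t ∈ Finset.univ.erase sstar, Complex.normSq (AuxPauli.pin (pauliString t) M) := by
    rw [← Finset.add_sum_erase _ _ (Finset.mem_univ sstar)]
    congr 1
    · rw [hcoef2, if_pos rfl, ← hα]
    · refine Finset.sum_congr rfl fun t ht => ?_
      rw [hcoef2, if_neg (Finset.mem_erase.mp ht).1, sub_zero]
  have habs : α - c * 2^k = ((‖α‖ : ℂ) - 2^k) * c := by
    conv_lhs => rw [← Complex.norm_mul_exp_arg_mul_I α]
    rw [hc]; ring
  have hnormsq : Complex.normSq (α - c * 2^k) = (2^k - ‖α‖)^2 := by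
    rw [habs, _root_.map_mul]
    have h1 : Complex.normSq c = 1 := by
      rw [hc, Complex.normSq_eq_norm_sq, Complex.norm_exp_ofReal_mul_I]; norm_num
    have h2 : ((‖α‖ : ℂ) - 2^k) = ((‖α‖ - 2^k : ℝ) : ℂ) := by push_cast; ring
    rw [h1, mul_one, h2, Complex.normSq_ofReal]
    ring
  -- arithmetic
  set r : ℝ := ‖α‖ with hrr
  set Δ : ℝ := ∑ t ∈ Finset.univ.erase sstar, Complex.normSq (AuxPauli.pin (pauliString t) M) with hΔ
  have hr2 : r^2 = Complex.normSq α := (Complex.sq_norm α).symm ▸ rfl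
  have hΔA : Complex.normSq α + Δ = 2^k * 2^k := by
    rw [hΔ, hα]
    exact (Finset.add_sum_erase _ (fun t => Complex.normSq (AuxPauli.pin (pauliString t) M))
      (Finset.mem_univ sstar)).trans htot
  have hΔ0 : 0 ≤ Δ := Finset.sum_nonneg fun t _ => ha0 t
  have hT : (0:ℝ) < 2^k := by positivity
  have hr0 : 0 ≤ r := norm_nonneg α
  have h1 : ((2:ℝ)^k - r) * (2^k + r) = Δ := by nlinarith [hr2, hΔA]
  have h2 : 0 ≤ (2:ℝ)^k - r := by nlinarith
  have h3 : ((2:ℝ)^k - r) * 2^k ≤ Δ := by nlinarith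
  have h4 : ((2:ℝ)^k - r)^2 * ((2:ℝ)^k)^2 ≤ Δ^2 := by nlinarith
  have hΔle : Δ ≤ (k:ℝ) * 2^k * ε / 2 := by linarith [hdelta]
  have h5 : Δ^2 ≤ ((k:ℝ) * 2^k * ε / 2)^2 := pow_le_pow_left₀ hΔ0 hΔle 2
  have hT2 : (0:ℝ) < ((2:ℝ)^k)^2 := by positivity
  have h6 : ((2:ℝ)^k - r)^2 ≤ (k:ℝ)^2 * ε^2 / 4 := by
    have key : ((2:ℝ)^k - r)^2 * ((2:ℝ)^k)^2 ≤ ((k:ℝ)^2 * ε^2 / 4) * ((2:ℝ)^k)^2 := by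
      calc ((2:ℝ)^k - r)^2 * ((2:ℝ)^k)^2 ≤ Δ^2 := h4
        _ ≤ ((k:ℝ) * 2^k * ε / 2)^2 := h5
        _ = ((k:ℝ)^2 * ε^2 / 4) * ((2:ℝ)^k)^2 := by ring
    exact le_of_mul_le_mul_right key hT2
  have hfrobeq : 2^k * frobSq (M - c • pauliString sstar) = (2^k - r)^2 + Δ := by
    rw [← parseval, hsplit, hnormsq]
  have hzp : (2:ℝ)^(-(k:ℤ) - 2) = ((2:ℝ)^k * 4)⁻¹ := AuxPauli.zp_eq k
  have hgoal : frobSq (M - c • pauliString sstar) = ((2^k - r)^2 + Δ) / 2^k := by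
    rw [eq_div_iff (ne_of_gt hT)]
    linarith [hfrobeq]
  rw [hc] at hgoal ⊢
  rw [hgoal, hzp, div_le_iff₀ hT]
  have hrhs : ((k:ℝ)/2 * ε + ((2:ℝ)^k * 4)⁻¹ * (k:ℝ)^2 * ε^2) * 2^k
      = (k:ℝ) * 2^k * ε / 2 + (k:ℝ)^2 * ε^2 / 4 := by
    field_simp
  rw [hrhs]
  linarith [h6, hΔle]
end

section
/- For every integer g ≥ 2, the positive integer GSD(g) = 2·6^{2g−2} + 4·3^{2g−2} + 2·2^{2g−2} has a prime factor p such that p does not divide 6. -/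
/-- For every integer g ≥ 2, the number
GSD(g) = 2·6^{2g−2} + 4·3^{2g−2} + 2·2^{2g−2} has a prime factor p with p ∤ 6. -/
theorem gsd_has_prime_factor_not_dividing_six (g : ℕ) (hg : 2 ≤ g) :
    ∃ p : ℕ, p.Prime ∧
      p ∣ (2 * 6 ^ (2 * g - 2) + 4 * 3 ^ (2 * g - 2) + 2 * 2 ^ (2 * g - 2)) ∧
      ¬ p ∣ 6 := by
  obtain ⟨m, rfl⟩ : ∃ m, g = m + 2 := ⟨g - 2, by omega⟩
  set M : ℕ := 18 * 36 ^ m + 9 * 9 ^ m + 2 * 4 ^ m with hM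
  have hN : 2 * 6 ^ (2 * (m + 2) - 2) + 4 * 3 ^ (2 * (m + 2) - 2) +
      2 * 2 ^ (2 * (m + 2) - 2) = 4 * M := by
    have he : 2 * (m + 2) - 2 = 2 * m + 2 := by omega
    rw [he, hM]
    have h6 : (6:ℕ) ^ (2 * m + 2) = 36 * 36 ^ m := by
      rw [pow_succ, pow_succ, pow_mul]; ring
    have h3 : (3:ℕ) ^ (2 * m + 2) = 9 * 9 ^ m := by
      rw [pow_succ, pow_succ, pow_mul]; ring
    have h2 : (2:ℕ) ^ (2 * m + 2) = 4 * 4 ^ m := by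
      rw [pow_succ, pow_succ, pow_mul]; ring
    rw [h6, h3, h2]; ring
  have hM1 : M ≠ 1 := by
    have : 18 ≤ 18 * 36 ^ m := Nat.le_mul_of_pos_right 18 (Nat.pow_pos (by norm_num : 0 < 36))
    omega
  have h9odd : 9 ^ m % 2 = 1 := by
    have := Nat.pow_mod 9 m 2
    simpa using this
  have h4mod3 : 4 ^ m % 3 = 1 := by
    have := Nat.pow_mod 4 m 3
    simpa using this
  have hnot2 : ¬ (2 ∣ M) := by
    rw [hM]
    have h1 : 2 ∣ 18 * 36 ^ m := ⟨9 * 36 ^ m, by ring⟩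
    have h2 : 2 ∣ 2 * 4 ^ m := ⟨4 ^ m, rfl⟩
    obtain ⟨k, hk⟩ := h1
    obtain ⟨l, hl⟩ := h2
    have h9 : 9 * 9 ^ m % 2 = 1 := by
      rw [Nat.mul_mod, h9odd]
    omega
  have hnot3 : ¬ (3 ∣ M) := by
    rw [hM]
    have h1 : 3 ∣ 18 * 36 ^ m := ⟨6 * 36 ^ m, by ring⟩
    have h2 : 3 ∣ 9 * 9 ^ m := ⟨3 * 9 ^ m, by ring⟩
    obtain ⟨k, hk⟩ := h1
    obtain ⟨l, hl⟩ := h2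
    have h4 : 2 * 4 ^ m % 3 = 2 := by
      rw [Nat.mul_mod, h4mod3]
    omega
  refine ⟨M.minFac, Nat.minFac_prime hM1, ?_, ?_⟩
  · rw [hN]
    exact Dvd.dvd.mul_left (Nat.minFac_dvd M) 4
  · intro hdvd
    have hp := Nat.minFac_prime hM1
    have hMd := Nat.minFac_dvd M
    have h2 := hp.two_le
    have hle : M.minFac ≤ 6 := Nat.le_of_dvd (by norm_num) hdvd
    interval_cases h : M.minFac
    · exact hnot2 (h ▸ hMd)
    · exact hnot3 (h ▸ hMd)
    · exact absurd hdvd (by norm_num)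
    · exact absurd hdvd (by norm_num)
    · exact absurd hp (by norm_num)
end

section
/- Let K ≥ 1 be an integer and let b, c be real numbers with −1 ≤ c ≤ 1. Then the following are equivalent: (i) there exist 2^K × 2^K complex matrices E and F with 0 ≤ E ≤ I and 0 ≤ F ≤ I (i.e., E, F and I − E, I − F are positive semidefinite), Tr(E) = Tr(F) = (1+c)·2^{K−1}, and Tr(Eᵀ F) = (1+2c+b)·2^{K−2}; (ii) 1 + 2c + b ≥ 0, 1 − 2c + b ≥ 0, and for every integer l with 0 ≤ l ≤ 2^K − 1, (1+2c+b)·2^{K−2} ≤ l + ((1+c)·2^{K−1} − l)². -/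
open Matrix
open scoped ComplexOrder


noncomputable def ffl (t : ℝ) : ℝ := ⌊t⌋ + (Int.fract t)^2

lemma ffl_sq_le {x : ℝ} (h0 : 0 ≤ x) (h1 : x ≤ 1) : x^2 ≤ ffl x := by
  rcases eq_or_lt_of_le h1 with rfl | h1
  · simp [ffl]
  · unfold ffl
    rw [Int.floor_eq_zero_iff.2 ⟨h0, h1⟩, Int.fract_eq_self.2 ⟨h0, h1⟩]
    simp

lemma ffl_superadd {x y : ℝ} (hx : 0 ≤ x) (hy : 0 ≤ y) : ffl x + ffl y ≤ ffl (x + y) := by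
  unfold ffl
  have hfx := Int.fract_nonneg x
  have hfy := Int.fract_nonneg y
  have hfx1 := Int.fract_lt_one x
  have hfy1 := Int.fract_lt_one y
  have hxy : x + y = (⌊x⌋ + ⌊y⌋ : ℤ) + (Int.fract x + Int.fract y) := by
    have := Int.floor_add_fract x
    have := Int.floor_add_fract y
    push_cast
    linarith
  rcases lt_or_ge (Int.fract x + Int.fract y) 1 with h | h
  · have hfl : ⌊x + y⌋ = ⌊x⌋ + ⌊y⌋ := by
      rw [hxy, Int.floor_intCast_add]
      simp [Int.floor_eq_zero_iff.2 ⟨by positivity, h⟩]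
    have hfr : Int.fract (x + y) = Int.fract x + Int.fract y := by
      have := Int.floor_add_fract (x + y)
      rw [hfl] at this
      push_cast at this ⊢
      linarith [Int.floor_add_fract x, Int.floor_add_fract y]
    rw [hfl, hfr]
    push_cast
    nlinarith
  · have hfl : ⌊x + y⌋ = ⌊x⌋ + ⌊y⌋ + 1 := by
      rw [hxy, Int.floor_intCast_add]
      have : ⌊Int.fract x + Int.fract y⌋ = 1 := by
        rw [Int.floor_eq_iff]
        constructor
        · simpa using h
        · push_cast; linarith
      omega
    have hfr : Int.fract (x + y) = Int.fract x + Int.fract y - 1 := by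
      have h2 := Int.floor_add_fract (x + y)
      rw [hfl] at h2
      push_cast at h2 ⊢
      linarith [Int.floor_add_fract x, Int.floor_add_fract y]
    rw [hfl, hfr]
    push_cast
    nlinarith [(mul_nonneg (sub_nonneg.2 hfx1.le) (sub_nonneg.2 hfy1.le))]

lemma ffl_sum {ι : Type*} [DecidableEq ι] (s : Finset ι) (g : ι → ℝ) (h0 : ∀ i ∈ s, 0 ≤ g i)
    (h1 : ∀ i ∈ s, g i ≤ 1) : ∑ i ∈ s, (g i)^2 ≤ ffl (∑ i ∈ s, g i) := by
  induction s using Finset.induction_on with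
  | empty => simp [ffl]
  | insert a s hni ih =>
    rw [Finset.sum_insert hni, Finset.sum_insert hni]
    calc (g a)^2 + ∑ i ∈ s, (g i)^2
        ≤ ffl (g a) + ffl (∑ i ∈ s, g i) := by
          gcongr ?_ + ?_
          · exact ffl_sq_le (h0 a (by simp)) (h1 a (by simp))
          · exact ih (fun i hi => h0 i (by simp [hi])) (fun i hi => h1 i (by simp [hi]))
      _ ≤ ffl (g a + ∑ i ∈ s, g i) := ffl_superadd (h0 a (by simp))
          (Finset.sum_nonneg fun i hi => h0 i (by simp [hi]))

lemma ffl_le (t : ℝ) (l : ℤ) : ffl t ≤ l + (t - l)^2 := by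
  unfold ffl
  have h1 : t = ⌊t⌋ + Int.fract t := (Int.floor_add_fract t).symm
  have hfr0 := Int.fract_nonneg t
  have hfr1 := (Int.fract_lt_one t).le
  set d : ℤ := ⌊t⌋ - l with hd
  have hld : (l:ℝ) = (⌊t⌋:ℝ) - d := by push_cast [hd]; ring
  rw [hld]
  have key : (0:ℝ) ≤ d * (d - 1 + 2 * Int.fract t) := by
    rcases lt_trichotomy d 0 with h | h | h
    · have hd1 : (d:ℝ) ≤ -1 := by exact_mod_cast Int.le_sub_one_of_lt h
      nlinarith
    · simp [h]
    · have hd1 : (1:ℝ) ≤ d := by exact_mod_cast h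
      nlinarith
  nlinarith [sq_nonneg ((d:ℝ) + Int.fract t - Int.fract t)]
open Matrix
open scoped ComplexOrder

variable {n : Type*} [Fintype n] [DecidableEq n]

lemma trace_eq_sum_eigs {A : Matrix n n ℂ} (hA : A.IsHermitian) :
    A.trace = ((∑ i, hA.eigenvalues i : ℝ) : ℂ) := by
  conv_lhs => rw [hA.spectral_theorem, Unitary.conjStarAlgAut_apply]
  rw [trace_mul_cycle,
    (Matrix.mem_unitaryGroup_iff').mp (hA.eigenvectorUnitary).2, one_mul, trace_diagonal]
  push_cast
  rfl

lemma trace_sq_eq_sum_eigs {A : Matrix n n ℂ} (hA : A.IsHermitian) :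
    (A * A).trace = ((∑ i, hA.eigenvalues i ^ 2 : ℝ) : ℂ) := by
  set U : Matrix n n ℂ := (hA.eigenvectorUnitary : Matrix n n ℂ)
  set D : Matrix n n ℂ := diagonal (RCLike.ofReal ∘ hA.eigenvalues)
  have hsU : star U * U = 1 := (Matrix.mem_unitaryGroup_iff').mp (hA.eigenvectorUnitary).2
  have key : A * A = U * (D * D) * star U := by
    conv_lhs => rw [hA.spectral_theorem]
    show U * D * star U * (U * D * star U) = _
    rw [mul_assoc (U * D), ← mul_assoc (star U) (U * D) (star U),
      ← mul_assoc (star U) U D, hsU, one_mul]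
    simp only [mul_assoc]
  rw [key, trace_mul_cycle, ← mul_assoc, hsU, one_mul, diagonal_mul_diagonal, trace_diagonal]
  push_cast
  simp [Function.comp_apply, pow_two]

lemma eigs_le_one {A : Matrix n n ℂ} (hA : A.IsHermitian) (h1 : (1 - A).PosSemidef) (i : n) :
    hA.eigenvalues i ≤ 1 := by
  set v : n → ℂ := ⇑(hA.eigenvectorBasis i) with hv
  have hv0 : v ≠ 0 := by
    simpa [hv] using hA.eigenvectorBasis.orthonormal.ne_zero i
  have hAv : A *ᵥ v = (hA.eigenvalues i : ℝ) • v := hA.mulVec_eigenvectorBasis i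
  have hdp : star v ⬝ᵥ (1 - A) *ᵥ v
      = (1 - (hA.eigenvalues i : ℂ)) * (star v ⬝ᵥ v) := by
    rw [sub_mulVec, one_mulVec, dotProduct_sub, hAv]
    rw [dotProduct_smul, RCLike.real_smul_eq_coe_mul]
    push_cast
    ring_nf
    rfl
  have hc : 0 ≤ star v ⬝ᵥ v := dotProduct_star_self_nonneg v
  have hcne : star v ⬝ᵥ v ≠ 0 := fun h => hv0 (dotProduct_star_self_eq_zero.mp h)
  have hcre : 0 < (star v ⬝ᵥ v).re := by
    rcases Complex.nonneg_iff.mp hc with ⟨h1', h2'⟩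
    rcases lt_or_eq_of_le h1' with h | h
    · exact h
    · exfalso; exact hcne (Complex.ext (by simpa using h.symm) (by simpa using h2'.symm))
  have h0 := h1.dotProduct_mulVec_nonneg v
  rw [hdp] at h0
  have := Complex.nonneg_iff.mp h0
  have hre : ((1 - (hA.eigenvalues i : ℂ)) * (star v ⬝ᵥ v)).re
      = (1 - hA.eigenvalues i) * (star v ⬝ᵥ v).re := by
    have him : (star v ⬝ᵥ v).im = 0 := ((Complex.nonneg_iff.mp hc).2).symm
    simp [Complex.mul_re, him]
  nlinarith [this.1, hre]

lemma psd_trace_nonneg {M : Matrix n n ℂ} (hM : M.PosSemidef) : 0 ≤ M.trace := by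
  rw [Matrix.trace]
  apply Finset.sum_nonneg
  intro i _
  have := hM.dotProduct_mulVec_nonneg (Pi.single i 1)
  simpa [dotProduct, Pi.single_apply, apply_ite, Matrix.diag] using this

lemma psd_trace_mul_nonneg {A B : Matrix n n ℂ} (hA : A.PosSemidef) (hB : B.PosSemidef) :
    0 ≤ (A * B).trace := by
  open scoped MatrixOrder in
  obtain ⟨X, rfl⟩ := CStarAlgebra.nonneg_iff_eq_star_mul_self.mp hA.nonneg
  have hpsd : (X * B * Xᴴ).PosSemidef := hB.mul_mul_conjTranspose_same X
  rw [star_eq_conjTranspose, trace_mul_cycle, trace_mul_cycle]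
  exact psd_trace_nonneg hpsd

lemma sum_eigs_eq {A : Matrix n n ℂ} (hA : A.PosSemidef) {t : ℝ} (hTA : A.trace = (t:ℂ)) :
    ∑ i, hA.1.eigenvalues i = t := by
  have := trace_eq_sum_eigs hA.1
  rw [hTA] at this
  exact_mod_cast this.symm

lemma trace_sq_le_ffl {A : Matrix n n ℂ} (hA : A.PosSemidef) (hA1 : (1 - A).PosSemidef)
    {t : ℝ} (hTA : A.trace = (t:ℂ)) :
    (A * A).trace = ((∑ i, hA.1.eigenvalues i ^ 2 : ℝ) : ℂ)
      ∧ (∑ i, hA.1.eigenvalues i ^ 2 : ℝ) ≤ ffl t := by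
  refine ⟨trace_sq_eq_sum_eigs hA.1, ?_⟩
  have := ffl_sum Finset.univ (fun i => hA.1.eigenvalues i)
    (fun i _ => hA.eigenvalues_nonneg i) (fun i _ => eigs_le_one hA.1 hA1 i)
  rwa [sum_eigs_eq hA hTA] at this

lemma forward_core {t S : ℝ} {A B : Matrix n n ℂ}
    (hA : A.PosSemidef) (hA1 : (1 - A).PosSemidef) (hB : B.PosSemidef)
    (hB1 : (1 - B).PosSemidef)
    (hTA : A.trace = (t:ℂ)) (hTB : B.trace = (t:ℂ)) (hTAB : (A * B).trace = (S:ℂ)) :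
    0 ≤ S ∧ 0 ≤ (Fintype.card n : ℝ) - 2*t + S ∧ S ≤ ffl t := by
  refine ⟨?_, ?_, ?_⟩
  · have h := psd_trace_mul_nonneg hA hB
    rw [hTAB] at h
    exact Complex.zero_le_real.mp h
  · have h := psd_trace_mul_nonneg hA1 hB1
    have hexp : (1 - A) * (1 - B) = 1 - A - B + A * B := by noncomm_ring
    rw [hexp, trace_add, trace_sub, trace_sub, trace_one, hTA, hTB, hTAB] at h
    have : ((Fintype.card n : ℂ) - (t:ℂ) - (t:ℂ) + (S:ℂ))
        = (((Fintype.card n : ℝ) - 2*t + S : ℝ) : ℂ) := by push_cast; ring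
    rw [this] at h
    exact Complex.zero_le_real.mp h
  · have hC : (A - B).IsHermitian := hA.1.sub hB.1
    have hpsd : ((A - B) * (A - B)).PosSemidef := by
      have := posSemidef_conjTranspose_mul_self (A - B)
      rwa [hC.eq] at this
    have h := psd_trace_nonneg hpsd
    have hexp : (A - B) * (A - B) = A * A + B * B - (A * B + B * A) := by noncomm_ring
    have hBA : (B * A).trace = (S : ℂ) := by rw [trace_mul_comm]; exact hTAB
    obtain ⟨hA2, hA2le⟩ := trace_sq_le_ffl hA hA1 hTA
    obtain ⟨hB2, hB2le⟩ := trace_sq_le_ffl hB hB1 hTB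
    rw [hexp, trace_sub, trace_add, trace_add, hA2, hB2, hTAB, hBA] at h
    have : ((((∑ i, hA.1.eigenvalues i ^ 2 : ℝ)) : ℂ) + ((∑ i, hB.1.eigenvalues i ^ 2 : ℝ) : ℂ)
        - ((S:ℂ) + (S:ℂ)))
        = ((((∑ i, hA.1.eigenvalues i ^ 2 : ℝ) + (∑ i, hB.1.eigenvalues i ^ 2 : ℝ) - 2*S : ℝ)) : ℂ) := by
      push_cast; ring
    rw [this] at h
    have hr := Complex.zero_le_real.mp h
    linarith
open Finset

lemma clamp_sum : ∀ (N : ℕ) (t : ℝ), 0 ≤ t → t ≤ N →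
    ∑ i ∈ range N, min 1 (max 0 (t - i)) = t := by
  intro N
  induction N with
  | zero => intro t h0 h1; simp at h1 ⊢; linarith
  | succ N ih =>
    intro t h0 h1
    rw [Finset.sum_range_succ']
    have hshift : ∀ i ∈ range N, min 1 (max 0 (t - (i + 1 : ℕ))) =
        min 1 (max 0 ((t - 1) - i)) := by
      intro i _
      push_cast
      ring_nf
    rw [Finset.sum_congr rfl hshift]
    rcases le_or_gt t 1 with ht | ht
    · have hz : ∀ i ∈ range N, min 1 (max 0 ((t - 1) - i)) = 0 := by
        intro i _
        have : (t - 1) - i ≤ 0 := by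
          have : (0:ℝ) ≤ i := Nat.cast_nonneg i
          linarith
        rw [max_eq_left this, min_eq_right zero_le_one]
      rw [Finset.sum_congr rfl hz]
      simp
      rw [max_eq_right h0, min_eq_right ht]
    · have hN : t - 1 ≤ N := by push_cast at h1 ⊢; linarith
      rw [ih (t-1) (by linarith) hN]
      have : min 1 (max 0 (t - (0:ℕ))) = 1 := by
        push_cast
        rw [sub_zero, max_eq_right h0, min_eq_left ht.le]
      rw [this]
      ring

lemma reverse_core (N M : ℕ) (hNM : N = 2*M) (hM : 1 ≤ M) (t S : ℝ)
    (ht0 : 0 ≤ t) (htN : t ≤ N) (hS0 : 0 ≤ S) (hSlow : 2*t - N ≤ S)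
    (hl : ∀ l : ℕ, l ≤ N - 1 → S ≤ l + (t - l)^2) :
    ∃ x y : ℕ → ℝ, (∀ i, 0 ≤ x i ∧ x i ≤ 1 ∧ 0 ≤ y i ∧ y i ≤ 1) ∧
      ∑ i ∈ Finset.range N, x i = t ∧ ∑ i ∈ Finset.range N, y i = t ∧
      ∑ i ∈ Finset.range N, x i * y i = S := by
  have hN1 : 1 ≤ N := by omega
  have hNpos : (0:ℝ) < N := by exact_mod_cast Nat.pos_of_ne_zero (by omega)
  -- the extremal vectors
  set a : ℝ := min 1 (2*t/N) with ha
  set β : ℝ := max 0 (2*t/N - 1) with hβ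
  have ha0 : 0 ≤ a := le_min zero_le_one (by positivity)
  have ha1 : a ≤ 1 := min_le_left _ _
  have hβ0 : 0 ≤ β := le_max_left _ _
  have hβ1 : β ≤ 1 := max_le zero_le_one (by
    rw [sub_le_iff_le_add, div_le_iff₀ hNpos]
    linarith)
  have haβ : a + β = 2*t/N := by
    rcases le_or_gt (2*t/N) 1 with h | h
    · rw [ha, hβ, min_eq_right h, max_eq_left (by linarith)]; ring
    · rw [ha, hβ, min_eq_left h.le, max_eq_right (by linarith)]; ring
  set e : ℕ → ℝ := fun i => if i < M then a else β with he
  set f : ℕ → ℝ := fun i => if i < M then β else a with hf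
  set v : ℕ → ℝ := fun i => min 1 (max 0 (t - i)) with hv
  have hv0 : ∀ i, 0 ≤ v i := fun i => le_min zero_le_one (le_max_left _ _) |>.trans_eq rfl
  have hv1 : ∀ i, v i ≤ 1 := fun i => min_le_left _ _
  -- sum splitting
  have hsplit : ∀ g : ℕ → ℝ, ∑ i ∈ range N, g i
      = ∑ i ∈ Finset.Ico 0 M, g i + ∑ i ∈ Finset.Ico M N, g i := by
    intro g
    rw [range_eq_Ico, ← Finset.sum_Ico_consecutive _ (Nat.zero_le M) (by omega)]
  have hconst : ∀ (c1 c2 : ℝ), ∑ i ∈ range N, (if i < M then c1 else c2) = M * c1 + M * c2 := by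
    intro c1 c2
    rw [hsplit]
    have h1 : ∑ i ∈ Finset.Ico 0 M, (if i < M then c1 else c2) = M * c1 := by
      rw [Finset.sum_congr rfl (fun i hi => by
        rw [if_pos (by simp at hi; omega)]), Finset.sum_const]
      simp [mul_comm]
    have h2 : ∑ i ∈ Finset.Ico M N, (if i < M then c1 else c2) = M * c2 := by
      rw [Finset.sum_congr rfl (fun i hi => by
        rw [if_neg (by simp at hi; omega)]), Finset.sum_const, Nat.card_Ico]
      have hNM2 : N - M = M := by omega
      rw [hNM2, nsmul_eq_mul]
    rw [h1, h2]
  have hMt : (M:ℝ) * (2*t/N) = t := by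
    have : (N:ℝ) = 2*M := by exact_mod_cast hNM
    field_simp [this]
    rw [this]; ring
  have hesum : ∑ i ∈ range N, e i = t := by rw [he, hconst]; rw [← mul_add, haβ, hMt]
  have hfsum : ∑ i ∈ range N, f i = t := by
    rw [hf, hconst]
    rw [← mul_add, add_comm β a, haβ, hMt]
  have hefsum : ∑ i ∈ range N, e i * f i ≤ S := by
    have : ∀ i, e i * f i = if i < M then a * β else β * a := by
      intro i; simp only [he, hf]; split <;> rfl
    rw [Finset.sum_congr rfl (fun i _ => this i), hconst]
    rcases le_or_gt (2*t/N) 1 with h | h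
    · have : β = 0 := by rw [hβ, max_eq_left (by linarith)]
      rw [this]; simpa using hS0
    · have haa : a = 1 := by rw [ha, min_eq_left h.le]
      have hββ : β = 2*t/N - 1 := by rw [hβ, max_eq_right (by linarith)]
      rw [haa, hββ]
      have hNM' : (N:ℝ) = 2*M := by exact_mod_cast hNM
      have : (M:ℝ) * (1 * (2 * t / ↑N - 1)) + ↑M * ((2 * t / ↑N - 1) * 1) = 2*t - N := by
        field_simp [hNM']
        rw [hNM']; ring
      rw [this]; exact hSlow
  have hvsum : ∑ i ∈ range N, v i = t := clamp_sum N t ht0 htN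
  -- lower bound on ∑ v i ^ 2
  set l₀ : ℕ := min (⌊t⌋.toNat) (N - 1) with hl₀
  have hfl0 : (0:ℤ) ≤ ⌊t⌋ := Int.floor_nonneg.mpr ht0
  have hl₀t : (l₀ : ℝ) ≤ t := by
    have h1 : (l₀ : ℤ) ≤ ⌊t⌋ := by
      have : l₀ ≤ ⌊t⌋.toNat := min_le_left _ _
      omega
    calc (l₀:ℝ) ≤ (⌊t⌋ : ℝ) := by exact_mod_cast h1
    _ ≤ t := Int.floor_le t
  have hl₀t1 : t - l₀ ≤ 1 := by
    rcases min_cases (⌊t⌋.toNat) (N-1) with ⟨hc, _⟩ | ⟨hc, _⟩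
    · have : (l₀ : ℤ) = ⌊t⌋ := by rw [hl₀, hc]; omega
      have h2 : (l₀:ℝ) = (⌊t⌋:ℝ) := by exact_mod_cast this
      rw [h2]
      linarith [Int.lt_floor_add_one t]
    · have : (l₀ : ℝ) = (N:ℝ) - 1 := by
        rw [hl₀, hc]
        push_cast [Nat.cast_sub hN1]
        ring
      rw [this]
      linarith
  have hl₀N : l₀ + 1 ≤ N := by omega
  have hvvsum : S ≤ ∑ i ∈ range N, v i * v i := by
    have hstep : ∑ i ∈ range (l₀+1), v i * v i ≤ ∑ i ∈ range N, v i * v i := by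
      apply Finset.sum_le_sum_of_subset_of_nonneg
      · exact Finset.range_subset_range.mpr hl₀N
      · intro i _ _; exact mul_nonneg (hv0 i) (hv0 i)
    have hv1s : ∀ i ∈ range l₀, v i * v i = 1 := by
      intro i hi
      simp only [Finset.mem_range] at hi
      have hit : (i:ℝ) + 1 ≤ t := by
        have : (i:ℝ) + 1 ≤ l₀ := by exact_mod_cast Nat.succ_le_of_lt hi
        linarith
      have : v i = 1 := by
        rw [hv]
        simp only
        rw [max_eq_right (by linarith), min_eq_left (by linarith)]
      rw [this]; norm_num
    have hvl₀ : v l₀ = t - l₀ := by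
      rw [hv]
      simp only
      rw [max_eq_right (by linarith), min_eq_right (by linarith)]
    have : ∑ i ∈ range (l₀+1), v i * v i = l₀ + (t - l₀)^2 := by
      rw [Finset.sum_range_succ, Finset.sum_congr rfl hv1s, Finset.sum_const, hvl₀]
      simp [pow_two]
    calc S ≤ (l₀:ℝ) + (t - l₀)^2 := hl l₀ (by omega)
    _ = ∑ i ∈ range (l₀+1), v i * v i := this.symm
    _ ≤ _ := hstep
  -- intermediate value theorem
  set φ : ℝ → ℝ := fun θ => ∑ i ∈ range N,
    ((1-θ) * e i + θ * v i) * ((1-θ) * f i + θ * v i) with hφ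
  have hφc : Continuous φ := by
    apply continuous_finset_sum
    intro i _
    fun_prop
  have hφ0 : φ 0 = ∑ i ∈ range N, e i * f i := by simp [hφ]
  have hφ1 : φ 1 = ∑ i ∈ range N, v i * v i := by simp [hφ]
  have hmem : S ∈ Set.Icc (φ 0) (φ 1) := by
    rw [hφ0, hφ1]; exact ⟨hefsum, hvvsum⟩
  obtain ⟨θ, hθ, hθS⟩ := intermediate_value_Icc zero_le_one hφc.continuousOn hmem
  obtain ⟨hθ0, hθ1⟩ := hθ
  have he01 : ∀ i, 0 ≤ e i ∧ e i ≤ 1 := by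
    intro i
    simp only [he]
    split
    · exact ⟨ha0, ha1⟩
    · exact ⟨hβ0, hβ1⟩
  have hf01 : ∀ i, 0 ≤ f i ∧ f i ≤ 1 := by
    intro i
    simp only [hf]
    split
    · exact ⟨hβ0, hβ1⟩
    · exact ⟨ha0, ha1⟩
  have hcomb : ∀ g : ℕ → ℝ, (∀ i, 0 ≤ g i ∧ g i ≤ 1) → ∀ i,
      0 ≤ (1-θ) * g i + θ * v i ∧ (1-θ) * g i + θ * v i ≤ 1 := by
    intro g hg i
    obtain ⟨hg0, hg1⟩ := hg i
    constructor
    · exact add_nonneg (mul_nonneg (by linarith) hg0) (mul_nonneg hθ0 (hv0 i))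
    · have h1 : (1-θ) * g i ≤ (1-θ) * 1 := by
        apply mul_le_mul_of_nonneg_left hg1 (by linarith)
      have h2 : θ * v i ≤ θ * 1 := mul_le_mul_of_nonneg_left (hv1 i) hθ0
      linarith
  have hcsum : ∀ g : ℕ → ℝ, (∑ i ∈ range N, g i = t) →
      ∑ i ∈ range N, ((1-θ) * g i + θ * v i) = t := by
    intro g hg
    rw [Finset.sum_add_distrib, ← Finset.mul_sum, ← Finset.mul_sum, hg, hvsum]
    ring
  exact ⟨fun i => (1-θ) * e i + θ * v i, fun i => (1-θ) * f i + θ * v i,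
    fun i => ⟨(hcomb e he01 i).1, (hcomb e he01 i).2, (hcomb f hf01 i).1, (hcomb f hf01 i).2⟩,
    hcsum e hesum, hcsum f hfsum, hθS⟩

/-- For K ≥ 1 and reals b, c with −1 ≤ c ≤ 1, the following are
equivalent: (i) there exist 2^K × 2^K matrices E, F with 0 ≤ E ≤ I, 0 ≤ F ≤ I,
Tr(E) = Tr(F) = (1+c)·2^{K−1} and Tr(Eᵀ F) = (1+2c+b)·2^{K−2};
(ii) 1+2c+b ≥ 0, 1−2c+b ≥ 0, and for every integer 0 ≤ l ≤ 2^K − 1,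
(1+2c+b)·2^{K−2} ≤ l + ((1+c)·2^{K−1} − l)². -/
theorem epr_correlation_feasibility (K : ℕ) (hK : 1 ≤ K) (b c : ℝ)
    (hc1 : -1 ≤ c) (hc2 : c ≤ 1) :
    (∃ E F : Matrix (Fin (2 ^ K)) (Fin (2 ^ K)) ℂ,
        E.PosSemidef ∧ (1 - E).PosSemidef ∧ F.PosSemidef ∧ (1 - F).PosSemidef ∧
        E.trace = (((1 + c) * 2 ^ ((K : ℤ) - 1) : ℝ) : ℂ) ∧
        F.trace = (((1 + c) * 2 ^ ((K : ℤ) - 1) : ℝ) : ℂ) ∧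
        (Eᵀ * F).trace = (((1 + 2 * c + b) * 2 ^ ((K : ℤ) - 2) : ℝ) : ℂ))
    ↔ (0 ≤ 1 + 2 * c + b ∧ 0 ≤ 1 - 2 * c + b ∧
        ∀ l : ℕ, l ≤ 2 ^ K - 1 →
          (1 + 2 * c + b) * 2 ^ ((K : ℤ) - 2)
            ≤ (l : ℝ) + ((1 + c) * 2 ^ ((K : ℤ) - 1) - (l : ℝ)) ^ 2) := by
  set P : ℝ := (2:ℝ) ^ ((K:ℤ) - 2) with hPdef
  have hP : 0 < P := by positivity
  have e1 : (2:ℝ) ^ ((K:ℤ) - 1) = 2 * P := by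
    rw [hPdef, show (K:ℤ) - 1 = ((K:ℤ) - 2) + 1 by ring, zpow_add_one₀ (two_ne_zero)]
    ring
  have e2 : ((2^K : ℕ) : ℝ) = 4 * P := by
    have h4 : ((2:ℝ)) ^ (K:ℤ) = 4 * P := by
      rw [hPdef, show (K:ℤ) = ((K:ℤ) - 2) + 2 by ring, zpow_add₀ (two_ne_zero)]
      norm_num
      ring
    rw [← h4]
    push_cast
    rw [← zpow_natCast]
  set t : ℝ := (1 + c) * 2 ^ ((K:ℤ) - 1) with htdef
  set S : ℝ := (1 + 2*c + b) * P with hSdef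
  constructor
  · rintro ⟨E, F, hE, hE1, hF, hF1, hTE, hTF, hTEF⟩
    have hA : (Eᵀ).PosSemidef := hE.transpose
    have hA1 : (1 - Eᵀ).PosSemidef := by
      have := hE1.transpose
      rwa [transpose_sub, transpose_one] at this
    have hTA : (Eᵀ).trace = ((t:ℝ):ℂ) := by rw [trace_transpose]; exact hTE
    obtain ⟨h1, h2, h3⟩ := forward_core hA hA1 hF hF1 hTA hTF hTEF
    rw [Fintype.card_fin] at h2
    rw [e2] at h2
    have ht4 : t = (1+c) * (2*P) := by rw [htdef, e1]
    refine ⟨?_, ?_, ?_⟩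
    · by_contra hcon
      push_neg at hcon
      nlinarith
    · by_contra hcon
      push_neg at hcon
      nlinarith
    · intro l _
      have hle := ffl_le t (l : ℤ)
      push_cast at hle
      linarith
  · rintro ⟨h1, h2, h3⟩
    have hM1 : 1 ≤ 2^(K-1) := Nat.one_le_two_pow
    have hNM : 2^K = 2 * 2^(K-1) := by
      conv_lhs => rw [show K = 1 + (K-1) by omega]
      rw [pow_add, pow_one]
    have ht4 : t = (1+c) * (2*P) := by rw [htdef, e1]
    have ht0 : 0 ≤ t := by nlinarith
    have htN : t ≤ ((2^K : ℕ) : ℝ) := by rw [e2]; nlinarith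
    have hS0 : 0 ≤ S := mul_nonneg h1 hP.le
    have hSlow : 2*t - ((2^K : ℕ) : ℝ) ≤ S := by
      rw [e2]
      nlinarith [mul_nonneg h2 hP.le]
    obtain ⟨x, y, hxy01, hx, hy, hxyS⟩ :=
      reverse_core (2^K) (2^(K-1)) hNM hM1 t S ht0 htN hS0 hSlow h3
    refine ⟨Matrix.diagonal (fun i : Fin (2^K) => ((x i.val : ℝ) : ℂ)),
      Matrix.diagonal (fun i : Fin (2^K) => ((y i.val : ℝ) : ℂ)), ?_, ?_, ?_, ?_, ?_, ?_, ?_⟩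
    · exact Matrix.posSemidef_diagonal_iff.mpr
        fun i => Complex.zero_le_real.mpr (hxy01 i.val).1
    · rw [← Matrix.diagonal_one, Matrix.diagonal_sub]
      refine Matrix.posSemidef_diagonal_iff.mpr fun i => ?_
      rw [show (1:ℂ) - ((x i.val : ℝ):ℂ) = ((1 - x i.val : ℝ) : ℂ) by push_cast; ring]
      exact Complex.zero_le_real.mpr (by linarith [(hxy01 i.val).2.1])
    · exact Matrix.posSemidef_diagonal_iff.mpr
        fun i => Complex.zero_le_real.mpr (hxy01 i.val).2.2.1
    · rw [← Matrix.diagonal_one, Matrix.diagonal_sub]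
      refine Matrix.posSemidef_diagonal_iff.mpr fun i => ?_
      rw [show (1:ℂ) - ((y i.val : ℝ):ℂ) = ((1 - y i.val : ℝ) : ℂ) by push_cast; ring]
      exact Complex.zero_le_real.mpr (by linarith [(hxy01 i.val).2.2.2])
    · rw [Matrix.trace_diagonal]
      rw [show ∑ i : Fin (2^K), ((x i.val : ℝ):ℂ)
        = ((∑ i : Fin (2^K), x i.val : ℝ) : ℂ) by push_cast; rfl]
      rw [Fin.sum_univ_eq_sum_range (fun i => x i) (2^K), hx]
    · rw [Matrix.trace_diagonal]
      rw [show ∑ i : Fin (2^K), ((y i.val : ℝ):ℂ)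
        = ((∑ i : Fin (2^K), y i.val : ℝ) : ℂ) by push_cast; rfl]
      rw [Fin.sum_univ_eq_sum_range (fun i => y i) (2^K), hy]
    · rw [Matrix.diagonal_transpose, Matrix.diagonal_mul_diagonal, Matrix.trace_diagonal]
      rw [show ∑ i : Fin (2^K), (((x i.val : ℝ):ℂ) * ((y i.val : ℝ):ℂ))
        = ((∑ i : Fin (2^K), x i.val * y i.val : ℝ) : ℂ) by push_cast; rfl]
      rw [Fin.sum_univ_eq_sum_range (fun i => x i * y i) (2^K), hxyS]
end

section
/- Let E be an N × N complex matrix with 0 ≤ E ≤ I (E Hermitian positive semidefinite with I − E positive semidefinite) and Tr(E) = t, and let l be an integer with l ≤ t ≤ l + 1. Then ‖E‖_F² = Tr(E²) ≤ l + (t − l)². -/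
open Matrix
open scoped ComplexOrder

private lemma sum_sq_le_aux : ∀ (n : ℕ) (x : Fin n → ℝ), (∀ i, 0 ≤ x i) → (∀ i, x i ≤ 1) →
    ∀ l : ℤ, (l : ℝ) ≤ ∑ i, x i → (∑ i, x i) ≤ (l : ℝ) + 1 →
    ∑ i, (x i) ^ 2 ≤ (l : ℝ) + ((∑ i, x i) - l) ^ 2 := by
  intro n
  induction n with
  | zero =>
    intro x h0 h1 l hl hl'
    simp only [Finset.univ_eq_empty, Finset.sum_empty] at *
    have hl0 : l ≤ 0 := by exact_mod_cast hl
    have hl1 : (-1 : ℤ) ≤ l := by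
      have : (-1 : ℝ) ≤ (l : ℝ) := by linarith
      exact_mod_cast this
    interval_cases l <;> norm_num
  | succ n ih =>
    intro x h0 h1 l hl hl'
    rw [Fin.sum_univ_castSucc (f := fun i => (x i) ^ 2), Fin.sum_univ_castSucc (f := x)]
    rw [Fin.sum_univ_castSucc (f := x)] at hl hl'
    set a := x (Fin.last n) with ha
    set T := ∑ i : Fin n, x (Fin.castSucc i) with hT
    have ha0 : 0 ≤ a := h0 _
    have ha1 : a ≤ 1 := h1 _
    by_cases hTl : (l : ℝ) ≤ T
    · have h2 := ih (fun i => x (Fin.castSucc i)) (fun i => h0 _) (fun i => h1 _) l hTl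
        (by linarith)
      have h3 : ∑ i : Fin n, (x (Fin.castSucc i)) ^ 2 ≤ (l : ℝ) + (T - l) ^ 2 := h2
      nlinarith [mul_nonneg ha0 (by linarith : (0:ℝ) ≤ T - (l:ℝ))]
    · push_neg at hTl
      have h2 := ih (fun i => x (Fin.castSucc i)) (fun i => h0 _) (fun i => h1 _) (l - 1)
        (by push_cast; linarith) (by push_cast; linarith)
      have h3 : ∑ i : Fin n, (x (Fin.castSucc i)) ^ 2 ≤ ((l:ℝ) - 1) + (T - ((l:ℝ) - 1)) ^ 2 := by
        push_cast at h2; linarith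
      nlinarith [mul_nonneg (by linarith : (0:ℝ) ≤ (l:ℝ) - T) (by linarith : (0:ℝ) ≤ 1 - a)]

/-- If E is an N × N complex matrix with 0 ≤ E ≤ I and Tr(E) = t, and l is
an integer with l ≤ t ≤ l + 1, then ‖E‖_F² = Tr(E²) ≤ l + (t − l)². -/
theorem frobenius_sq_bound_of_trace {N : ℕ} (E : Matrix (Fin N) (Fin N) ℂ)
    (t : ℝ) (l : ℤ)
    (hE : E.PosSemidef) (hIE : ((1 : Matrix (Fin N) (Fin N) ℂ) - E).PosSemidef)
    (ht : E.trace = (t : ℂ)) (hl : (l : ℝ) ≤ t) (hl' : t ≤ (l : ℝ) + 1) :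
    (∑ i, ∑ j, ‖E i j‖ ^ 2) = ((E * E).trace).re ∧
    (∑ i, ∑ j, ‖E i j‖ ^ 2) ≤ (l : ℝ) + (t - (l : ℝ)) ^ 2 := by
  have hH := hE.1
  set lam := hH.eigenvalues with hlam
  set U := (hH.eigenvectorUnitary : Matrix (Fin N) (Fin N) ℂ) with hU
  have hUU : star U * U = 1 := Matrix.mem_unitaryGroup_iff'.mp hH.eigenvectorUnitary.2
  set D := diagonal (RCLike.ofReal ∘ lam : Fin N → ℂ) with hD
  have hspec : E = U * D * star U := hH.spectral_theorem
  -- trace of E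
  have htr : E.trace = ∑ i, (lam i : ℂ) := by
    conv_lhs => rw [hspec]
    rw [trace_mul_cycle, hUU, one_mul, hD, trace_diagonal]
    simp [Function.comp]
  have hsum : ∑ i, lam i = t := by
    have : ((∑ i, lam i : ℝ) : ℂ) = (t : ℂ) := by rw [← ht, htr]; push_cast; rfl
    exact_mod_cast this
  -- trace of E²
  have hcanc : star U * (U * D * star U) = D * star U := by
    rw [← mul_assoc, ← mul_assoc, hUU, one_mul]
  have hEE : E * E = U * (D * D) * star U := by
    calc E * E = U * D * star U * (U * D * star U) := by rw [← hspec]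
    _ = U * D * (star U * (U * D * star U)) := by rw [mul_assoc]
    _ = U * D * (D * star U) := by rw [hcanc]
    _ = U * (D * D) * star U := by simp only [mul_assoc]
  have htr2 : (E * E).trace = ∑ i, ((lam i : ℂ)) ^ 2 := by
    rw [hEE, trace_mul_cycle, hUU, one_mul, hD, diagonal_mul_diagonal, trace_diagonal]
    simp [Function.comp, pow_two]
  -- eigenvalues in [0,1]
  have h0 : ∀ i, 0 ≤ lam i := hE.eigenvalues_nonneg
  have h1 : ∀ i, lam i ≤ 1 := by
    intro i
    have hvv : star (⇑(hH.eigenvectorBasis i)) ⬝ᵥ ⇑(hH.eigenvectorBasis i) = 1 := by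
      have hnorm := hH.eigenvectorBasis.orthonormal.1 i
      have h := (EuclideanSpace.inner_eq_star_dotProduct (𝕜 := ℂ)
        (hH.eigenvectorBasis i) (hH.eigenvectorBasis i)).symm
      rw [inner_self_eq_norm_sq_to_K, hnorm] at h
      rw [dotProduct_comm]
      simpa using h
    have hd := hIE.re_dotProduct_nonneg (⇑(hH.eigenvectorBasis i))
    have key : star (⇑(hH.eigenvectorBasis i)) ⬝ᵥ
        ((1 - E) *ᵥ ⇑(hH.eigenvectorBasis i)) = 1 - (lam i : ℂ) := by
      rw [sub_mulVec, one_mulVec, dotProduct_sub, hvv, hH.mulVec_eigenvectorBasis i,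
        RCLike.real_smul_eq_coe_smul (K := ℂ), dotProduct_smul, hvv]
      simp [hlam]
    rw [key] at hd
    simp at hd
    linarith
  -- first conjunct
  have hfro : (∑ i, ∑ j, ‖E i j‖ ^ 2) = ((E * E).trace).re := by
    rw [Matrix.trace, Complex.re_sum]
    apply Finset.sum_congr rfl
    intro i _
    rw [Matrix.diag, Matrix.mul_apply, Complex.re_sum]
    apply Finset.sum_congr rfl
    intro j _
    have hji : E j i = (starRingEnd ℂ) (E i j) := by
      have := congrFun (congrFun hH j) i
      rw [conjTranspose_apply] at this
      rw [← this]
      simp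
    rw [hji, Complex.mul_conj, Complex.ofReal_re, ← Complex.sq_norm]
  refine ⟨hfro, ?_⟩
  rw [hfro]
  have hre : ((E * E).trace).re = ∑ i, (lam i) ^ 2 := by
    rw [htr2, Complex.re_sum]
    apply Finset.sum_congr rfl
    intro i _
    rw [← Complex.ofReal_pow, Complex.ofReal_re]
  rw [hre, ← hsum]
  exact sum_sq_le_aux N lam h0 h1 l (by rw [hsum]; exact hl) (by rw [hsum]; exact hl')
end
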